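/- (Octahedron of separable Bell-diagonal states) Let ρ = Σ_{μ=0}^{3} ρ_μ P_μ be a Bell-diagonal two-qubit state, i.e. ρ_μ ≥ 0 and Σ_μ ρ_μ = 1, where P_μ are the Bell projections. Then ρ is separable if and only if ρ_μ ≤ 1/2 for every μ ∈ {0,1,2,3}. -/

import Mathlib

open Matrix
open scoped Kronecker ComplexOrder

/-- The four Pauli matrices (paper's convention, with `σ₃` the antisymmetric one). -/
noncomputable def pauli : Fin 4 → Matrix (Fin 2) (Fin 2) ℂ :=
  ![!![1, 0; 0, 1], !![1, 0; 0, -1], !![0, 1; 1, 0], !![0, -Complex.I; Complex.I, 0]]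

/-- The Bell vectors `β_μ = (1/√2) Σ_{a,b} (σ_μ)_{ab} e_a ⊗ e_b` in `ℂ²⊗ℂ² ≃ ℂ^{2×2}`. -/
noncomputable def bell (μ : Fin 4) : Fin 2 × Fin 2 → ℂ :=
  fun p => (1 / (Real.sqrt 2 : ℂ)) * pauli μ p.1 p.2

/-- The Bell projection `P_μ = β_μ β_μ*` (outer product). -/
noncomputable def bellProj (μ : Fin 4) : Matrix (Fin 2 × Fin 2) (Fin 2 × Fin 2) ℂ :=
  Matrix.vecMulVec (bell μ) (star (bell μ))

/-- A two-qubit state is separable if it is a convex combination of product states. -/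
def IsSepState (ρ : Matrix (Fin 2 × Fin 2) (Fin 2 × Fin 2) ℂ) : Prop :=
  ∃ (N : ℕ) (p : Fin N → ℝ) (ρA ρB : Fin N → Matrix (Fin 2) (Fin 2) ℂ),
    (∀ n, 0 ≤ p n) ∧ (∑ n, p n = 1) ∧
    (∀ n, (ρA n).PosSemidef ∧ (ρA n).trace = 1) ∧
    (∀ n, (ρB n).PosSemidef ∧ (ρB n).trace = 1) ∧
    ρ = ∑ n, (p n : ℂ) • (ρA n ⊗ₖ ρB n)

/-! ### Auxiliary lemmas -/

lemma psd_outer (v : Fin 2 → ℂ) : (Matrix.vecMulVec v (star v)).PosSemidef := by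
  refine Matrix.PosSemidef.of_dotProduct_mulVec_nonneg ?_ ?_
  · ext i j
    simp [Matrix.vecMulVec, Matrix.conjTranspose_apply, mul_comm]
  · intro x
    have h : star x ⬝ᵥ (Matrix.vecMulVec v (star v) *ᵥ x) = (star v ⬝ᵥ x) * star (star v ⬝ᵥ x) := by
      simp only [Matrix.vecMulVec, Matrix.mulVec, dotProduct, Fin.sum_univ_two,
        Pi.star_apply, Matrix.of_apply, star_add, star_mul', star_star]
      ring
    rw [h]
    exact mul_star_self_nonneg _

lemma bell_entry (μ : Fin 4) (p q : Fin 2 × Fin 2) :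
    bellProj μ p q = (2:ℂ)⁻¹ * (pauli μ p.1 p.2 * star (pauli μ q.1 q.2)) := by
  have h2 : (Real.sqrt 2 : ℂ) * (Real.sqrt 2 : ℂ) = 2 := by
    rw [← Complex.ofReal_mul, Real.mul_self_sqrt (by norm_num)]; norm_num
  have hne : (Real.sqrt 2 : ℂ) ≠ 0 := by
    simp only [ne_eq, Complex.ofReal_eq_zero]; positivity
  simp only [bellProj, Matrix.vecMulVec_apply, bell, Pi.star_apply, star_mul', star_one,
    star_div₀, Complex.star_def, Complex.conj_ofReal, one_div]
  field_simp
  ring_nf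
  simp only [map_inv₀, Complex.conj_ofReal]
  field_simp
  linear_combination -(pauli μ p.1 p.2 * (starRingEnd ℂ) (pauli μ q.1 q.2)) * h2

noncomputable def Zp : Matrix (Fin 2) (Fin 2) ℂ := !![1,0;0,0]
noncomputable def Zm : Matrix (Fin 2) (Fin 2) ℂ := !![0,0;0,1]
noncomputable def Xp : Matrix (Fin 2) (Fin 2) ℂ := !![1/2,1/2;1/2,1/2]
noncomputable def Xm : Matrix (Fin 2) (Fin 2) ℂ := !![1/2,-(1/2);-(1/2),1/2]
noncomputable def Yp : Matrix (Fin 2) (Fin 2) ℂ := !![1/2,-(Complex.I/2);Complex.I/2,1/2]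
noncomputable def Ym : Matrix (Fin 2) (Fin 2) ℂ := !![1/2,Complex.I/2;-(Complex.I/2),1/2]
noncomputable def Hf : Matrix (Fin 2) (Fin 2) ℂ := !![1/2,0;0,1/2]

noncomputable def rA : Fin 13 → Matrix (Fin 2) (Fin 2) ℂ :=
  ![Zp, Zm, Zp, Zm, Xp, Xm, Xp, Xm, Yp, Ym, Yp, Ym, Hf]
noncomputable def rB : Fin 13 → Matrix (Fin 2) (Fin 2) ℂ :=
  ![Zp, Zm, Zm, Zp, Xp, Xm, Xm, Xp, Ym, Yp, Yp, Ym, Hf]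

noncomputable def wt (c : Fin 4 → ℝ) (q1 s1 q2 s2 q3 s3 : ℝ) : Fin 13 → ℝ :=
  ![q1/2, q1/2, s1/2, s1/2, q2/2, q2/2, s2/2, s2/2, q3/2, q3/2, s3/2, s3/2,
    (c 0 + c 1 + c 2 + c 3) - (q1+s1+q2+s2+q3+s3)]

lemma hinv2 : ((Real.sqrt 2)⁻¹ : ℝ) * (Real.sqrt 2)⁻¹ = 1/2 := by
  rw [← mul_inv, Real.mul_self_sqrt] <;> norm_num

lemma hinv2C : ((Real.sqrt 2 : ℝ) : ℂ)⁻¹ * ((Real.sqrt 2 : ℝ) : ℂ)⁻¹ = 1/2 := by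
  rw [← Complex.ofReal_inv, ← Complex.ofReal_mul, hinv2]; norm_num

lemma psdZp : Zp.PosSemidef ∧ Zp.trace = 1 := by
  constructor
  · have h : Zp = Matrix.vecMulVec ![1,0] (star ![1,0]) := by
      ext i j; fin_cases i <;> fin_cases j <;> simp [Zp, Matrix.vecMulVec]
    rw [h]; exact psd_outer _
  · simp [Zp, Matrix.trace, Fin.sum_univ_two]

lemma psdZm : Zm.PosSemidef ∧ Zm.trace = 1 := by
  constructor
  · have h : Zm = Matrix.vecMulVec ![0,1] (star ![0,1]) := by
      ext i j; fin_cases i <;> fin_cases j <;> simp [Zm, Matrix.vecMulVec]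
    rw [h]; exact psd_outer _
  · simp [Zm, Matrix.trace, Fin.sum_univ_two]

lemma psdXp : Xp.PosSemidef ∧ Xp.trace = 1 := by
  constructor
  · have h : Xp = Matrix.vecMulVec ![(((Real.sqrt 2)⁻¹ : ℝ) : ℂ), (((Real.sqrt 2)⁻¹ : ℝ) : ℂ)]
        (star ![(((Real.sqrt 2)⁻¹ : ℝ) : ℂ), (((Real.sqrt 2)⁻¹ : ℝ) : ℂ)]) := by
      ext i j; fin_cases i <;> fin_cases j <;>
        simp [Xp, Matrix.vecMulVec, Complex.conj_ofReal, ← Complex.ofReal_mul, hinv2C] <;> norm_num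
    rw [h]; exact psd_outer _
  · simp [Xp, Matrix.trace, Fin.sum_univ_two]; norm_num

lemma psdXm : Xm.PosSemidef ∧ Xm.trace = 1 := by
  constructor
  · have h : Xm = Matrix.vecMulVec ![(((Real.sqrt 2)⁻¹ : ℝ) : ℂ), -(((Real.sqrt 2)⁻¹ : ℝ) : ℂ)]
        (star ![(((Real.sqrt 2)⁻¹ : ℝ) : ℂ), -(((Real.sqrt 2)⁻¹ : ℝ) : ℂ)]) := by
      ext i j; fin_cases i <;> fin_cases j <;>
        simp [Xm, Matrix.vecMulVec, Complex.conj_ofReal, hinv2C]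
    rw [h]; exact psd_outer _
  · simp [Xm, Matrix.trace, Fin.sum_univ_two]; norm_num

lemma psdYp : Yp.PosSemidef ∧ Yp.trace = 1 := by
  constructor
  · have h : Yp = Matrix.vecMulVec ![(((Real.sqrt 2)⁻¹ : ℝ) : ℂ), Complex.I * (((Real.sqrt 2)⁻¹ : ℝ) : ℂ)]
        (star ![(((Real.sqrt 2)⁻¹ : ℝ) : ℂ), Complex.I * (((Real.sqrt 2)⁻¹ : ℝ) : ℂ)]) := by
      ext i j; fin_cases i <;> fin_cases j <;>
        simp [Yp, Matrix.vecMulVec, Complex.conj_ofReal, Complex.conj_I, mul_comm, mul_assoc,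
          mul_left_comm, hinv2C] <;> ring_nf <;>
        simp [Complex.ext_iff, hinv2] <;> norm_num [hinv2]
    rw [h]; exact psd_outer _
  · simp [Yp, Matrix.trace, Fin.sum_univ_two]; norm_num

lemma psdYm : Ym.PosSemidef ∧ Ym.trace = 1 := by
  constructor
  · have h : Ym = Matrix.vecMulVec ![(((Real.sqrt 2)⁻¹ : ℝ) : ℂ), -(Complex.I * (((Real.sqrt 2)⁻¹ : ℝ) : ℂ))]
        (star ![(((Real.sqrt 2)⁻¹ : ℝ) : ℂ), -(Complex.I * (((Real.sqrt 2)⁻¹ : ℝ) : ℂ))]) := by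
      ext i j; fin_cases i <;> fin_cases j <;>
        simp [Ym, Matrix.vecMulVec, Complex.conj_ofReal, Complex.conj_I, mul_comm, mul_assoc,
          mul_left_comm, hinv2C] <;> ring_nf <;>
        simp [Complex.ext_iff, hinv2] <;> norm_num [hinv2]
    rw [h]; exact psd_outer _
  · simp [Ym, Matrix.trace, Fin.sum_univ_two]; norm_num

lemma psdHf : Hf.PosSemidef ∧ Hf.trace = 1 := by
  constructor
  · refine Matrix.PosSemidef.of_dotProduct_mulVec_nonneg ?_ ?_
    · ext i j; fin_cases i <;> fin_cases j <;> simp [Hf]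
    · intro x
      have h : star x ⬝ᵥ (Hf *ᵥ x) = (2⁻¹:ℂ) * (star (x 0) * x 0 + star (x 1) * x 1) := by
        simp [Hf, Matrix.mulVec, dotProduct, Fin.sum_univ_two]
        ring
      rw [h]
      have h1 : (0:ℂ) ≤ (2⁻¹:ℂ) := by
        rw [Complex.le_def]; norm_num
      exact mul_nonneg h1 (add_nonneg (star_mul_self_nonneg _) (star_mul_self_nonneg _))
  · simp [Hf, Matrix.trace, Fin.sum_univ_two]; norm_num

lemma master (a b cc d p q r s : ℝ) (ha : 0 ≤ a) (hb : 0 ≤ b) (hc : 0 ≤ cc) (hd : 0 ≤ d)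
    (h1 : p^2 + q^2 ≤ a*b) (h2 : r^2 + s^2 ≤ cc*d) : 2*(p*r - q*s) ≤ a*d + b*cc := by
  nlinarith [sq_nonneg (p*s+q*r), sq_nonneg (p*r - q*s), sq_nonneg (a*d - b*cc),
    mul_nonneg ha hd, mul_nonneg hb hc, sq_nonneg (a*d + b*cc - 2*(p*r - q*s)),
    mul_nonneg (mul_nonneg ha hb) (mul_nonneg hc hd)]

lemma psd_facts (A : Matrix (Fin 2) (Fin 2) ℂ) (h : A.PosSemidef) (ht : A.trace = 1) :
    0 ≤ (A 0 0).re ∧ 0 ≤ (A 1 1).re ∧ (A 0 0).re + (A 1 1).re = 1 ∧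
    (A 0 0).im = 0 ∧ (A 1 1).im = 0 ∧
    (A 1 0).re = (A 0 1).re ∧ (A 1 0).im = -(A 0 1).im ∧
    (A 0 1).re^2 + (A 0 1).im^2 ≤ (A 0 0).re * (A 1 1).re := by
  have h00 : star (A 0 0) = A 0 0 := congrFun (congrFun h.1 0) 0
  have h11 : star (A 1 1) = A 1 1 := congrFun (congrFun h.1 1) 1
  have h01 : star (A 1 0) = A 0 1 := congrFun (congrFun h.1 0) 1
  have him0 : (A 0 0).im = 0 := by
    have := congrArg Complex.im h00
    rw [Complex.star_def, Complex.conj_im] at this; linarith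
  have him1 : (A 1 1).im = 0 := by
    have := congrArg Complex.im h11
    rw [Complex.star_def, Complex.conj_im] at this; linarith
  have hre : (A 1 0).re = (A 0 1).re := by
    have := congrArg Complex.re h01; simpa using this
  have him : (A 1 0).im = -(A 0 1).im := by
    have := congrArg Complex.im h01; simp at this; linarith
  have htr : A 0 0 + A 1 1 = 1 := by
    simpa [Matrix.trace, Fin.sum_univ_two] using ht
  have htre : (A 0 0).re + (A 1 1).re = 1 := by
    have := congrArg Complex.re htr; simpa using this
  have hd0 : 0 ≤ (A 0 0).re := by
    have := h.dotProduct_mulVec_nonneg (Pi.single 0 1)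
    simp [Matrix.mulVec, dotProduct, Fin.sum_univ_two, Pi.single] at this
    exact (Complex.le_def.mp this).1
  have hd1 : 0 ≤ (A 1 1).re := by
    have := h.dotProduct_mulVec_nonneg (Pi.single 1 1)
    simp [Matrix.mulVec, dotProduct, Fin.sum_univ_two, Pi.single] at this
    exact (Complex.le_def.mp this).1
  refine ⟨hd0, hd1, htre, him0, him1, hre, him, ?_⟩
  have d1 := h.dotProduct_mulVec_nonneg ![A 1 1, -(A 1 0)]
  have d2 := h.dotProduct_mulVec_nonneg ![-(A 0 1), A 0 0]
  simp only [Matrix.mulVec, dotProduct, Fin.sum_univ_two, Matrix.cons_val_zero,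
    Matrix.cons_val_one, Matrix.head_cons, Pi.star_apply, star_neg] at d1 d2
  have hsum := add_nonneg d1 d2
  have h10 : star (A 0 1) = A 1 0 := by rw [← h01, star_star]
  have heq : star (A 1 1) * (A 0 0 * A 1 1 + A 0 1 * -A 1 0) +
      -star (A 1 0) * (A 1 0 * A 1 1 + A 1 1 * -A 1 0) +
      (-star (A 0 1) * (A 0 0 * -A 0 1 + A 0 1 * A 0 0) +
       star (A 0 0) * (A 1 0 * -A 0 1 + A 1 1 * A 0 0)) =
      A 0 0 * A 1 1 - A 0 1 * A 1 0 := by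
    rw [h00, h11, h01, h10]
    linear_combination (A 0 0 * A 1 1 - A 0 1 * A 1 0) * htr
  rw [heq] at hsum
  have hre2 := (Complex.le_def.mp hsum).1
  simp [Complex.mul_re, him0, him1] at hre2
  rw [hre, him] at hre2; nlinarith [hre2]

set_option maxHeartbeats 4000000 in
lemma decomp (c : Fin 4 → ℝ) (q1 s1 q2 s2 q3 s3 : ℝ)
    (h1 : q1 = s1 + (c 0 + c 1 - c 2 - c 3)) (h2 : q2 = s2 + (c 0 - c 1 + c 2 - c 3))
    (h3 : q3 = s3 + (c 0 - c 1 - c 2 + c 3)) :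
    ∑ μ : Fin 4, (c μ : ℂ) • bellProj μ =
      ∑ n : Fin 13, ((wt c q1 s1 q2 s2 q3 s3 n : ℂ)) • (rA n ⊗ₖ rB n) := by
  subst h1 h2 h3
  ext ⟨a,b⟩ ⟨a',b'⟩
  fin_cases a <;> fin_cases b <;> fin_cases a' <;> fin_cases b' <;>
    · simp [Matrix.sum_apply, Fin.sum_univ_four, Fin.sum_univ_succ, bell_entry, pauli,
        wt, rA, rB, Zp, Zm, Xp, Xm, Yp, Ym, Hf, Matrix.kroneckerMap_apply,
        Complex.star_def, Complex.conj_I, show (Fin.succ 0 : Fin 4) = 1 from rfl,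
        show (Fin.succ 1 : Fin 4) = 2 from rfl, show (Fin.succ 2 : Fin 4) = 3 from rfl]
      try push_cast
      try ring_nf
      try rfl
      try simp only [Complex.I_sq]
      try ring_nf
      try norm_num

lemma trace_one_prod {x y u v : ℝ} (hx : x + y = 1) (hu : u + v = 1) :
    x*u + x*v + y*u + y*v = 1 := by nlinarith [hx, hu]

lemma per1 (A B : Matrix (Fin 2) (Fin 2) ℂ) (hA : A.PosSemidef) (hAt : A.trace = 1)
    (hB : B.PosSemidef) (hBt : B.trace = 1) :
    ((A 0 0).re * (B 0 0).re - (A 0 0).im * (B 0 0).im) +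
    ((A 0 1).re * (B 0 1).re - (A 0 1).im * (B 0 1).im) +
    ((A 1 0).re * (B 1 0).re - (A 1 0).im * (B 1 0).im) +
    ((A 1 1).re * (B 1 1).re - (A 1 1).im * (B 1 1).im) ≤ 1 := by
  obtain ⟨a0,a1,atr,ai0,ai1,are,aim,adet⟩ := psd_facts A hA hAt
  obtain ⟨b0,b1,btr,bi0,bi1,bre,bim,bdet⟩ := psd_facts B hB hBt
  rw [are, aim, bre, bim, ai0, ai1, bi0, bi1]
  have hm := master (A 0 0).re (A 1 1).re (B 0 0).re (B 1 1).re
    (A 0 1).re (A 0 1).im (B 0 1).re (B 0 1).im a0 a1 b0 b1 adet bdet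
  have ht := trace_one_prod atr btr
  nlinarith [hm, ht]

lemma per2 (A B : Matrix (Fin 2) (Fin 2) ℂ) (hA : A.PosSemidef) (hAt : A.trace = 1)
    (hB : B.PosSemidef) (hBt : B.trace = 1) :
    ((A 0 0).re * (B 0 0).re - (A 0 0).im * (B 0 0).im) -
    ((A 0 1).re * (B 0 1).re - (A 0 1).im * (B 0 1).im) -
    ((A 1 0).re * (B 1 0).re - (A 1 0).im * (B 1 0).im) +
    ((A 1 1).re * (B 1 1).re - (A 1 1).im * (B 1 1).im) ≤ 1 := by
  obtain ⟨a0,a1,atr,ai0,ai1,are,aim,adet⟩ := psd_facts A hA hAt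
  obtain ⟨b0,b1,btr,bi0,bi1,bre,bim,bdet⟩ := psd_facts B hB hBt
  rw [are, aim, bre, bim, ai0, ai1, bi0, bi1]
  have hm := master (A 0 0).re (A 1 1).re (B 0 0).re (B 1 1).re
    (-(A 0 1).re) (-(A 0 1).im) (B 0 1).re (B 0 1).im a0 a1 b0 b1
    (by nlinarith [adet]) bdet
  have ht := trace_one_prod atr btr
  nlinarith [hm, ht]

lemma per3 (A B : Matrix (Fin 2) (Fin 2) ℂ) (hA : A.PosSemidef) (hAt : A.trace = 1)
    (hB : B.PosSemidef) (hBt : B.trace = 1) :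
    ((A 0 0).re * (B 1 1).re - (A 0 0).im * (B 1 1).im) +
    ((A 0 1).re * (B 1 0).re - (A 0 1).im * (B 1 0).im) +
    ((A 1 0).re * (B 0 1).re - (A 1 0).im * (B 0 1).im) +
    ((A 1 1).re * (B 0 0).re - (A 1 1).im * (B 0 0).im) ≤ 1 := by
  obtain ⟨a0,a1,atr,ai0,ai1,are,aim,adet⟩ := psd_facts A hA hAt
  obtain ⟨b0,b1,btr,bi0,bi1,bre,bim,bdet⟩ := psd_facts B hB hBt
  rw [are, aim, bre, bim, ai0, ai1, bi0, bi1]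
  have hm := master (A 0 0).re (A 1 1).re (B 1 1).re (B 0 0).re
    (A 0 1).re (A 0 1).im (B 0 1).re (-(B 0 1).im) a0 a1 b1 b0
    adet (by nlinarith [bdet])
  have ht := trace_one_prod atr btr
  nlinarith [hm, ht]

lemma per4 (A B : Matrix (Fin 2) (Fin 2) ℂ) (hA : A.PosSemidef) (hAt : A.trace = 1)
    (hB : B.PosSemidef) (hBt : B.trace = 1) :
    ((A 0 0).re * (B 1 1).re - (A 0 0).im * (B 1 1).im) -
    ((A 0 1).re * (B 1 0).re - (A 0 1).im * (B 1 0).im) -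
    ((A 1 0).re * (B 0 1).re - (A 1 0).im * (B 0 1).im) +
    ((A 1 1).re * (B 0 0).re - (A 1 1).im * (B 0 0).im) ≤ 1 := by
  obtain ⟨a0,a1,atr,ai0,ai1,are,aim,adet⟩ := psd_facts A hA hAt
  obtain ⟨b0,b1,btr,bi0,bi1,bre,bim,bdet⟩ := psd_facts B hB hBt
  rw [are, aim, bre, bim, ai0, ai1, bi0, bi1]
  have hm := master (A 0 0).re (A 1 1).re (B 1 1).re (B 0 0).re
    (-(A 0 1).re) (-(A 0 1).im) (B 0 1).re (-(B 0 1).im) a0 a1 b1 b0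
    (by nlinarith [adet]) (by nlinarith [bdet])
  have ht := trace_one_prod atr btr
  nlinarith [hm, ht]


set_option maxHeartbeats 2000000 in
/-- A Bell-diagonal two-qubit state `Σ ρ_μ P_μ` is separable iff all `ρ_μ ≤ 1/2`. -/
theorem bell_diagonal_separable_iff (c : Fin 4 → ℝ)
    (hpos : ∀ μ, 0 ≤ c μ) (hsum : ∑ μ, c μ = 1) :
    IsSepState (∑ μ : Fin 4, (c μ : ℂ) • bellProj μ) ↔ ∀ μ, c μ ≤ 1 / 2 := by
  have hsum4 : c 0 + c 1 + c 2 + c 3 = 1 := by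
    simpa [Fin.sum_univ_four] using hsum
  constructor
  · rintro ⟨N, p, A, B, hp, hps, hA, hB, hρ⟩
    intro μ
    have e1 := congrFun (congrFun hρ ((0:Fin 2),(0:Fin 2))) ((0:Fin 2),(0:Fin 2))
    have e2 := congrFun (congrFun hρ ((0:Fin 2),(0:Fin 2))) ((1:Fin 2),(1:Fin 2))
    have e3 := congrFun (congrFun hρ ((1:Fin 2),(1:Fin 2))) ((0:Fin 2),(0:Fin 2))
    have e4 := congrFun (congrFun hρ ((1:Fin 2),(1:Fin 2))) ((1:Fin 2),(1:Fin 2))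
    have f1 := congrFun (congrFun hρ ((0:Fin 2),(1:Fin 2))) ((0:Fin 2),(1:Fin 2))
    have f2 := congrFun (congrFun hρ ((0:Fin 2),(1:Fin 2))) ((1:Fin 2),(0:Fin 2))
    have f3 := congrFun (congrFun hρ ((1:Fin 2),(0:Fin 2))) ((0:Fin 2),(1:Fin 2))
    have f4 := congrFun (congrFun hρ ((1:Fin 2),(0:Fin 2))) ((1:Fin 2),(0:Fin 2))
    simp [Matrix.sum_apply, Fin.sum_univ_four, bell_entry, pauli,
      Matrix.kroneckerMap_apply, Complex.star_def, Complex.conj_I] at e1 e2 e3 e4 f1 f2 f3 f4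
    have hps' : ∑ n, p n = 1 := hps
    fin_cases μ
    · show c 0 ≤ 1/2
      have key : ((2 * c 0 : ℝ) : ℂ) =
          (∑ x : Fin N, (p x : ℂ) * (A x 0 0 * B x 0 0)) +
          (∑ x : Fin N, (p x : ℂ) * (A x 0 1 * B x 0 1)) +
          (∑ x : Fin N, (p x : ℂ) * (A x 1 0 * B x 1 0)) +
          (∑ x : Fin N, (p x : ℂ) * (A x 1 1 * B x 1 1)) := by
        push_cast
        linear_combination e1 + e2 + e3 + e4
      rw [← Finset.sum_add_distrib, ← Finset.sum_add_distrib, ← Finset.sum_add_distrib] at key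
      have keyR := congrArg Complex.re key
      simp only [Complex.re_sum, Complex.add_re, Complex.re_ofReal_mul, Complex.mul_re,
        Complex.ofReal_re, Complex.ofReal_im, zero_mul, sub_zero] at keyR
      have hb : ∑ x : Fin N,
          (p x * ((A x 0 0).re * (B x 0 0).re - (A x 0 0).im * (B x 0 0).im) +
           p x * ((A x 0 1).re * (B x 0 1).re - (A x 0 1).im * (B x 0 1).im) +
           p x * ((A x 1 0).re * (B x 1 0).re - (A x 1 0).im * (B x 1 0).im) +
           p x * ((A x 1 1).re * (B x 1 1).re - (A x 1 1).im * (B x 1 1).im)) ≤ ∑ x, p x := by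
        refine Finset.sum_le_sum fun n _ => ?_
        have hE := per1 (A n) (B n) (hA n).1 (hA n).2 (hB n).1 (hB n).2
        nlinarith [hp n, hE]
      rw [hps'] at hb
      linarith [keyR, hb]
    · show c 1 ≤ 1/2
      have key : ((2 * c 1 : ℝ) : ℂ) =
          (∑ x : Fin N, (p x : ℂ) * (A x 0 0 * B x 0 0)) -
          (∑ x : Fin N, (p x : ℂ) * (A x 0 1 * B x 0 1)) -
          (∑ x : Fin N, (p x : ℂ) * (A x 1 0 * B x 1 0)) +
          (∑ x : Fin N, (p x : ℂ) * (A x 1 1 * B x 1 1)) := by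
        push_cast
        linear_combination e1 - e2 - e3 + e4
      rw [← Finset.sum_sub_distrib, ← Finset.sum_sub_distrib, ← Finset.sum_add_distrib] at key
      have keyR := congrArg Complex.re key
      simp only [Complex.re_sum, Complex.add_re, Complex.sub_re, Complex.re_ofReal_mul,
        Complex.mul_re, Complex.ofReal_re, Complex.ofReal_im, zero_mul, sub_zero] at keyR
      have hb : ∑ x : Fin N,
          (p x * ((A x 0 0).re * (B x 0 0).re - (A x 0 0).im * (B x 0 0).im) -
           p x * ((A x 0 1).re * (B x 0 1).re - (A x 0 1).im * (B x 0 1).im) -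
           p x * ((A x 1 0).re * (B x 1 0).re - (A x 1 0).im * (B x 1 0).im) +
           p x * ((A x 1 1).re * (B x 1 1).re - (A x 1 1).im * (B x 1 1).im)) ≤ ∑ x, p x := by
        refine Finset.sum_le_sum fun n _ => ?_
        have hE := per2 (A n) (B n) (hA n).1 (hA n).2 (hB n).1 (hB n).2
        nlinarith [hp n, hE]
      rw [hps'] at hb
      linarith [keyR, hb]
    · show c 2 ≤ 1/2
      have key : ((2 * c 2 : ℝ) : ℂ) =
          (∑ x : Fin N, (p x : ℂ) * (A x 0 0 * B x 1 1)) +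
          (∑ x : Fin N, (p x : ℂ) * (A x 0 1 * B x 1 0)) +
          (∑ x : Fin N, (p x : ℂ) * (A x 1 0 * B x 0 1)) +
          (∑ x : Fin N, (p x : ℂ) * (A x 1 1 * B x 0 0)) := by
        push_cast
        linear_combination f1 + f2 + f3 + f4
      rw [← Finset.sum_add_distrib, ← Finset.sum_add_distrib, ← Finset.sum_add_distrib] at key
      have keyR := congrArg Complex.re key
      simp only [Complex.re_sum, Complex.add_re, Complex.re_ofReal_mul, Complex.mul_re,
        Complex.ofReal_re, Complex.ofReal_im, zero_mul, sub_zero] at keyR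
      have hb : ∑ x : Fin N,
          (p x * ((A x 0 0).re * (B x 1 1).re - (A x 0 0).im * (B x 1 1).im) +
           p x * ((A x 0 1).re * (B x 1 0).re - (A x 0 1).im * (B x 1 0).im) +
           p x * ((A x 1 0).re * (B x 0 1).re - (A x 1 0).im * (B x 0 1).im) +
           p x * ((A x 1 1).re * (B x 0 0).re - (A x 1 1).im * (B x 0 0).im)) ≤ ∑ x, p x := by
        refine Finset.sum_le_sum fun n _ => ?_
        have hE := per3 (A n) (B n) (hA n).1 (hA n).2 (hB n).1 (hB n).2
        nlinarith [hp n, hE]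
      rw [hps'] at hb
      linarith [keyR, hb]
    · show c 3 ≤ 1/2
      have key : ((2 * c 3 : ℝ) : ℂ) =
          (∑ x : Fin N, (p x : ℂ) * (A x 0 0 * B x 1 1)) -
          (∑ x : Fin N, (p x : ℂ) * (A x 0 1 * B x 1 0)) -
          (∑ x : Fin N, (p x : ℂ) * (A x 1 0 * B x 0 1)) +
          (∑ x : Fin N, (p x : ℂ) * (A x 1 1 * B x 0 0)) := by
        push_cast
        linear_combination f1 - f2 - f3 + f4
      rw [← Finset.sum_sub_distrib, ← Finset.sum_sub_distrib, ← Finset.sum_add_distrib] at key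
      have keyR := congrArg Complex.re key
      simp only [Complex.re_sum, Complex.add_re, Complex.sub_re, Complex.re_ofReal_mul,
        Complex.mul_re, Complex.ofReal_re, Complex.ofReal_im, zero_mul, sub_zero] at keyR
      have hb : ∑ x : Fin N,
          (p x * ((A x 0 0).re * (B x 1 1).re - (A x 0 0).im * (B x 1 1).im) -
           p x * ((A x 0 1).re * (B x 1 0).re - (A x 0 1).im * (B x 1 0).im) -
           p x * ((A x 1 0).re * (B x 0 1).re - (A x 1 0).im * (B x 0 1).im) +
           p x * ((A x 1 1).re * (B x 0 0).re - (A x 1 1).im * (B x 0 0).im)) ≤ ∑ x, p x := by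
        refine Finset.sum_le_sum fun n _ => ?_
        have hE := per4 (A n) (B n) (hA n).1 (hA n).2 (hB n).1 (hB n).2
        nlinarith [hp n, hE]
      rw [hps'] at hb
      linarith [keyR, hb]
  · intro hc
    set t1 := c 0 + c 1 - c 2 - c 3 with ht1
    set t2 := c 0 - c 1 + c 2 - c 3 with ht2
    set t3 := c 0 - c 1 - c 2 + c 3 with ht3
    have habs1 : max t1 0 + max (-t1) 0 = |t1| := by rcases le_total t1 0 with h|h <;>
      simp [abs_of_nonpos, abs_of_nonneg, max_eq_left, max_eq_right, h] <;> linarith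
    have habs2 : max t2 0 + max (-t2) 0 = |t2| := by rcases le_total t2 0 with h|h <;>
      simp [abs_of_nonpos, abs_of_nonneg, max_eq_left, max_eq_right, h] <;> linarith
    have habs3 : max t3 0 + max (-t3) 0 = |t3| := by rcases le_total t3 0 with h|h <;>
      simp [abs_of_nonpos, abs_of_nonneg, max_eq_left, max_eq_right, h] <;> linarith
    have hoct : |t1| + |t2| + |t3| ≤ 1 := by
      rcases abs_cases t1 with ⟨h1,_⟩|⟨h1,_⟩ <;> rcases abs_cases t2 with ⟨h2,_⟩|⟨h2,_⟩ <;>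
        rcases abs_cases t3 with ⟨h3,_⟩|⟨h3,_⟩ <;> rw [h1, h2, h3] <;>
        first
        | linarith [hc 0, hpos 0, hsum4]
        | linarith [hc 1, hpos 1, hsum4]
        | linarith [hc 2, hpos 2, hsum4]
        | linarith [hc 3, hpos 3, hsum4]
    refine ⟨13, wt c (max t1 0) (max (-t1) 0) (max t2 0) (max (-t2) 0) (max t3 0) (max (-t3) 0),
      rA, rB, ?_, ?_, ?_, ?_, ?_⟩
    · intro n
      fin_cases n <;>
        first
        | exact div_nonneg (le_max_right _ _) (by norm_num)
        | (show (0:ℝ) ≤ (c 0 + c 1 + c 2 + c 3) -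
              (max t1 0 + max (-t1) 0 + max t2 0 + max (-t2) 0 + max t3 0 + max (-t3) 0)
           linarith [habs1, habs2, habs3, hoct, hsum4])
    · simp [wt, Fin.sum_univ_succ]
      linarith [hsum4, habs1, habs2, habs3]
    · intro n
      fin_cases n <;>
        first
        | exact psdZp | exact psdZm | exact psdXp | exact psdXm
        | exact psdYp | exact psdYm | exact psdHf
    · intro n
      fin_cases n <;>
        first
        | exact psdZp | exact psdZm | exact psdXp | exact psdXm
        | exact psdYp | exact psdYm | exact psdHf
    · refine decomp c _ _ _ _ _ _ ?_ ?_ ?_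
      · rcases le_total t1 0 with h|h
        · rw [max_eq_right h, max_eq_left (by linarith : (0:ℝ) ≤ -t1)]; linarith [ht1]
        · rw [max_eq_left h, max_eq_right (by linarith : -t1 ≤ (0:ℝ))]; linarith [ht1]
      · rcases le_total t2 0 with h|h
        · rw [max_eq_right h, max_eq_left (by linarith : (0:ℝ) ≤ -t2)]; linarith [ht2]
        · rw [max_eq_left h, max_eq_right (by linarith : -t2 ≤ (0:ℝ))]; linarith [ht2]
      · rcases le_total t3 0 with h|h
        · rw [max_eq_right h, max_eq_left (by linarith : (0:ℝ) ≤ -t3)]; linarith [ht3]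
        · rw [max_eq_left h, max_eq_right (by linarith : -t3 ≤ (0:ℝ))]; linarith [ht3]
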